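/- Under assumption (i) (joint independence of the instrument from all potential outcomes), for every instrument value z ∈ {1,…,K} and all y, ỹ ∈ {0,1}: P(Y(x_0) = y, Y(x_1) = ỹ) ≤ P(Y = y, X = 0 | Z = z) + P(Y = ỹ, X = 1 | Z = z). -/

import Mathlib

open MeasureTheory ProbabilityTheory

/-- Under assumption (i) (joint independence of the instrument from all
potential outcomes), for every instrument value `z` and all `y, ỹ ∈ {0,1}`:
`P(Y(x₀) = y, Y(x₁) = ỹ) ≤ P(Y = y, X = 0 | Z = z) + P(Y = ỹ, X = 1 | Z = z)`. -/
theorem stmt1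
    {Ω : Type*} [MeasurableSpace Ω] (P : Measure Ω) [IsProbabilityMeasure P]
    (K : ℕ) (hK : 1 ≤ K)
    (Z : Ω → Fin K) (Xz : Fin K → Ω → Fin 2) (Y0 Y1 : Ω → Fin 2)
    (hZ : Measurable Z) (hXz : ∀ z, Measurable (Xz z))
    (hY0 : Measurable Y0) (hY1 : Measurable Y1)
    (X : Ω → Fin 2) (hX : ∀ ω, X ω = Xz (Z ω) ω)
    (Y : Ω → Fin 2) (hY : ∀ ω, Y ω = if X ω = 0 then Y0 ω else Y1 ω)
    (hpos : ∀ z, 0 < P (Z ⁻¹' {z}))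
    (hindep : IndepFun Z (fun ω => (Y0 ω, Y1 ω, fun z => Xz z ω)) P) :
    ∀ (z : Fin K) (y ytilde : Fin 2),
      (P {ω | Y0 ω = y ∧ Y1 ω = ytilde}).toReal ≤
        (P[|Z ⁻¹' {z}] {ω | Y ω = y ∧ X ω = 0}).toReal +
          (P[|Z ⁻¹' {z}] {ω | Y ω = ytilde ∧ X ω = 1}).toReal := by
  intro z y ytilde
  set W : Ω → Fin 2 × Fin 2 × (Fin K → Fin 2) :=
    fun ω => (Y0 ω, Y1 ω, fun z => Xz z ω) with hW
  have hZz : MeasurableSet (Z ⁻¹' {z}) := hZ (measurableSet_singleton z)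
  have hPz0 : P (Z ⁻¹' {z}) ≠ 0 := (hpos z).ne'
  have hPzt : P (Z ⁻¹' {z}) ≠ ⊤ := measure_ne_top P _
  -- conditional probability of W-events equals unconditional probability
  have key : ∀ (s : Set (Fin 2 × Fin 2 × (Fin K → Fin 2))), MeasurableSet s →
      P[|Z ⁻¹' {z}] (W ⁻¹' s) = P (W ⁻¹' s) := by
    intro s hs
    rw [cond_apply hZz,
      hindep.measure_inter_preimage_eq_mul _ _ (measurableSet_singleton z) hs,
      ← mul_assoc, ENNReal.inv_mul_cancel hPz0 hPzt, one_mul]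
  -- the two W-events
  set s0 : Set (Fin 2 × Fin 2 × (Fin K → Fin 2)) := {p | p.1 = y ∧ p.2.2 z = 0} with hs0
  set s1 : Set (Fin 2 × Fin 2 × (Fin K → Fin 2)) := {p | p.2.1 = ytilde ∧ p.2.2 z = 1} with hs1
  have hms0 : MeasurableSet s0 := by
    have : s0 = (Prod.fst ⁻¹' {y}) ∩ ((fun p => p.2.2 z) ⁻¹' ({0} : Set (Fin 2))) := by
      ext p; simp [hs0]
    rw [this]
    exact (measurable_fst (measurableSet_singleton y)).inter
      (((measurable_pi_apply z).comp (measurable_snd.comp measurable_snd))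
        (measurableSet_singleton 0))
  have hms1 : MeasurableSet s1 := by
    have : s1 = ((fun p => p.2.1) ⁻¹' {ytilde}) ∩ ((fun p => p.2.2 z) ⁻¹' ({1} : Set (Fin 2))) := by
      ext p; simp [hs1]
    rw [this]
    exact ((measurable_fst.comp measurable_snd) (measurableSet_singleton ytilde)).inter
      (((measurable_pi_apply z).comp (measurable_snd.comp measurable_snd))
        (measurableSet_singleton 1))
  -- identify the conditional events with W-events on Z = z
  have hset0 : Z ⁻¹' {z} ∩ {ω | Y ω = y ∧ X ω = 0} = Z ⁻¹' {z} ∩ W ⁻¹' s0 := by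
    ext ω
    simp only [Set.mem_inter_iff, Set.mem_preimage, Set.mem_singleton_iff, Set.mem_setOf_eq,
      hs0, hW]
    constructor
    · rintro ⟨hz, hYy, hX0⟩
      rw [hX, hz] at hX0
      refine ⟨hz, ?_, hX0⟩
      rw [hY] at hYy
      rw [hX, hz] at hYy
      simpa [hX0] using hYy
    · rintro ⟨hz, hY0y, hX0⟩
      have hXω : X ω = 0 := by rw [hX, hz]; exact hX0
      exact ⟨hz, by rw [hY, if_pos hXω]; exact hY0y, hXω⟩
  have hA0 : P[|Z ⁻¹' {z}] {ω | Y ω = y ∧ X ω = 0} = P (W ⁻¹' s0) := by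
    rw [cond_apply hZz, hset0, ← cond_apply hZz, key s0 hms0]
  have hset1 : Z ⁻¹' {z} ∩ {ω | Y ω = ytilde ∧ X ω = 1} = Z ⁻¹' {z} ∩ W ⁻¹' s1 := by
    ext ω
    simp only [Set.mem_inter_iff, Set.mem_preimage, Set.mem_singleton_iff, Set.mem_setOf_eq,
      hs1, hW]
    constructor
    · rintro ⟨hz, hYy, hX1⟩
      rw [hX, hz] at hX1
      refine ⟨hz, ?_, hX1⟩
      have hne : Xz z ω ≠ 0 := by rw [hX1]; decide
      rw [hY, hX, hz, if_neg hne] at hYy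
      exact hYy
    · rintro ⟨hz, hY1y, hX1⟩
      have hXω : X ω = 1 := by rw [hX, hz]; exact hX1
      have hne : X ω ≠ 0 := by rw [hXω]; decide
      exact ⟨hz, by rw [hY, if_neg hne]; exact hY1y, hXω⟩
  have hA1 : P[|Z ⁻¹' {z}] {ω | Y ω = ytilde ∧ X ω = 1} = P (W ⁻¹' s1) := by
    rw [cond_apply hZz, hset1, ← cond_apply hZz, key s1 hms1]
  have hcond0 : P[|Z ⁻¹' {z}] {ω | Y ω = y ∧ X ω = 0} = P (W ⁻¹' s0) := hA0
  have hcond1 : P[|Z ⁻¹' {z}] {ω | Y ω = ytilde ∧ X ω = 1} = P (W ⁻¹' s1) := hA1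
  rw [hcond0, hcond1]
  -- the main inequality
  have hsub : {ω | Y0 ω = y ∧ Y1 ω = ytilde} ⊆ (W ⁻¹' s0) ∪ (W ⁻¹' s1) := by
    intro ω ⟨h0, h1⟩
    by_cases hx : Xz z ω = 0
    · left; exact ⟨h0, hx⟩
    · right; exact ⟨h1, Fin.eq_one_of_ne_zero _ hx⟩
  have hle : P {ω | Y0 ω = y ∧ Y1 ω = ytilde} ≤ P (W ⁻¹' s0) + P (W ⁻¹' s1) :=
    le_trans (measure_mono hsub) (measure_union_le _ _)
  have h := ENNReal.toReal_mono (by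
      exact ENNReal.add_ne_top.mpr ⟨measure_ne_top P _, measure_ne_top P _⟩) hle
  rwa [ENNReal.toReal_add (measure_ne_top P _) (measure_ne_top P _)] at h
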